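/- Define L(A) = −log det(𝟏 − A) on the set of Hermitian p×p matrices A with A < 𝟏. Then the convex (Legendre–Fenchel) dual L*(X) = sup_{Y Hermitian, Y < 𝟏} { tr(XY) − L(Y) } equals tr X − p − log det X for Hermitian positive definite X (and equals +∞ if X is not positive definite). -/

import Mathlib

open Matrix
open scoped ComplexOrder

private lemma herm_trace_eq {p : ℕ} (A : Matrix (Fin p) (Fin p) ℂ) (hA : A.IsHermitian) :
    A.trace = ∑ i, (hA.eigenvalues i : ℂ) := by
  exact hA.trace_eq_sum_eigenvalues

private lemma logdet_le {p : ℕ} (W : Matrix (Fin p) (Fin p) ℂ) (hW : W.PosDef) :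
    Real.log W.det.re ≤ W.trace.re - p := by
  have hdet : W.det = ((∏ i, hW.1.eigenvalues i : ℝ) : ℂ) := by
    rw [hW.1.det_eq_prod_eigenvalues]; push_cast; rfl
  have htr : W.trace = ((∑ i, hW.1.eigenvalues i : ℝ) : ℂ) := by
    rw [herm_trace_eq W hW.1]; push_cast; rfl
  rw [hdet, htr, Complex.ofReal_re, Complex.ofReal_re,
    Real.log_prod (fun i _ => (hW.eigenvalues_pos i).ne')]
  calc ∑ i, Real.log (hW.1.eigenvalues i) ≤ ∑ i, (hW.1.eigenvalues i - 1) :=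
        Finset.sum_le_sum fun i _ => Real.log_le_sub_one_of_pos (hW.eigenvalues_pos i)
    _ = (∑ i, hW.1.eigenvalues i) - p := by
        rw [Finset.sum_sub_distrib, Finset.sum_const, Finset.card_univ]; simp

private lemma posDef_conj {p : ℕ} {Z B : Matrix (Fin p) (Fin p) ℂ} (hZ : Z.PosDef)
    (hB : IsUnit B) : (Bᴴ * Z * B).PosDef := by
  refine Matrix.PosDef.of_dotProduct_mulVec_pos ?_ fun x hx => ?_
  · show (Bᴴ * Z * B)ᴴ = Bᴴ * Z * B
    rw [Matrix.conjTranspose_mul, Matrix.conjTranspose_mul, conjTranspose_conjTranspose,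
      hZ.1.eq, Matrix.mul_assoc]
  · have hBx : B *ᵥ x ≠ 0 := fun h =>
      hx <| Matrix.mulVec_injective_iff_isUnit.mpr hB (by simpa using h)
    have key : star x ⬝ᵥ (Bᴴ * Z * B) *ᵥ x = star (B *ᵥ x) ⬝ᵥ Z *ᵥ (B *ᵥ x) := by
      rw [← Matrix.mulVec_mulVec, ← Matrix.mulVec_mulVec, Matrix.dotProduct_mulVec (star x),
        ← Matrix.star_mulVec]
    rw [key]
    exact hZ.dotProduct_mulVec_pos hBx

private lemma trace_mul_vecMulVec {p : ℕ} (X : Matrix (Fin p) (Fin p) ℂ) (u v : Fin p → ℂ) :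
    (X * vecMulVec u v).trace = v ⬝ᵥ (X *ᵥ u) := by
  simp only [Matrix.trace, Matrix.diag, Matrix.mul_apply, Matrix.vecMulVec_apply, dotProduct,
    Matrix.mulVec, dotProduct, Finset.mul_sum]
  exact Finset.sum_congr rfl fun i _ => Finset.sum_congr rfl fun j _ => by ring

private lemma quad_im_zero {p : ℕ} {X : Matrix (Fin p) (Fin p) ℂ} (hX : X.IsHermitian)
    (x : Fin p → ℂ) : (star x ⬝ᵥ X *ᵥ x).im = 0 := by
  have h : star (star x ⬝ᵥ X *ᵥ x) = star x ⬝ᵥ X *ᵥ x := by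
    rw [← Matrix.star_dotProduct, Matrix.star_mulVec, hX.eq, ← Matrix.dotProduct_mulVec]
  have h2 := congrArg Complex.im h
  simp only [Complex.star_def, Complex.conj_im] at h2
  linarith

example : True := trivial

open scoped MatrixOrder in
private lemma exists_herm_sqrt {p : ℕ} {X : Matrix (Fin p) (Fin p) ℂ} (hX : X.PosDef) :
    ∃ B : Matrix (Fin p) (Fin p) ℂ, B * B = X ∧ B.IsHermitian :=
  ⟨CFC.sqrt X, CFC.sqrt_mul_sqrt_self X hX.posSemidef.nonneg, (CFC.sqrt_nonneg X).posSemidef.1⟩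

private lemma det_re_pos {p : ℕ} {W : Matrix (Fin p) (Fin p) ℂ} (hW : W.PosDef) :
    0 < W.det.re ∧ W.det.im = 0 := by
  have := hW.det_pos
  rw [Complex.lt_def] at this
  exact ⟨by simpa using this.1, by simpa using this.2.symm⟩

theorem stmt_4 (p : ℕ) (X : Matrix (Fin p) (Fin p) ℂ) (hX : X.IsHermitian) :
    (X.PosDef →
      IsLUB { t : ℝ | ∃ Y : Matrix (Fin p) (Fin p) ℂ, Y.IsHermitian ∧ (1 - Y).PosDef ∧
          t = ((X * Y).trace).re + Real.log ((1 - Y).det).re }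
        (X.trace.re - p - Real.log X.det.re)) ∧
    (¬ X.PosDef → ∀ M : ℝ, ∃ Y : Matrix (Fin p) (Fin p) ℂ,
        Y.IsHermitian ∧ (1 - Y).PosDef ∧
        M < ((X * Y).trace).re + Real.log ((1 - Y).det).re) := by
  constructor
  · intro hXpd
    have hXdet := det_re_pos hXpd
    have hub : (X.trace.re - p - Real.log X.det.re) ∈ upperBounds
        { t : ℝ | ∃ Y : Matrix (Fin p) (Fin p) ℂ, Y.IsHermitian ∧ (1 - Y).PosDef ∧
          t = ((X * Y).trace).re + Real.log ((1 - Y).det).re } := by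
      rintro t ⟨Y, hY, hZpd, rfl⟩
      set Z := 1 - Y with hZdef
      obtain ⟨B, hBsq, hBH⟩ := exists_herm_sqrt hXpd
      have hBunit : IsUnit B := by
        rw [Matrix.isUnit_iff_isUnit_det]
        have hd : IsUnit (B.det * B.det) := by
          rw [← Matrix.det_mul, hBsq]
          exact isUnit_iff_ne_zero.mpr hXpd.det_pos.ne'
        exact isUnit_of_mul_isUnit_left hd
      have hW : (B * Z * B).PosDef := by
        have := posDef_conj hZpd hBunit
        rwa [hBH.eq] at this
      have hZdet := det_re_pos hZpd
      have htrW : (B * Z * B).trace = (X * Z).trace := by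
        rw [Matrix.trace_mul_cycle, hBsq]
      have hdetW : (B * Z * B).det = X.det * Z.det := by
        rw [Matrix.det_mul, Matrix.det_mul, ← hBsq, Matrix.det_mul]; ring
      have hWre : (B * Z * B).det.re = X.det.re * Z.det.re := by
        rw [hdetW, Complex.mul_re, hXdet.2]
        simp
      have hkey := logdet_le _ hW
      rw [hWre, Real.log_mul hXdet.1.ne' hZdet.1.ne', htrW] at hkey
      have hXY : X * Y = X - X * Z := by
        rw [hZdef, Matrix.mul_sub, Matrix.mul_one, sub_sub_cancel]
      have htr_re : ((X * Y).trace).re = X.trace.re - ((X * Z).trace).re := by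
        rw [hXY, Matrix.trace_sub, Complex.sub_re]
      rw [htr_re]
      linarith
    have hmem : (X.trace.re - p - Real.log X.det.re) ∈
        { t : ℝ | ∃ Y : Matrix (Fin p) (Fin p) ℂ, Y.IsHermitian ∧ (1 - Y).PosDef ∧
          t = ((X * Y).trace).re + Real.log ((1 - Y).det).re } := by
      refine ⟨1 - X⁻¹, Matrix.isHermitian_one.sub hX.inv, ?_, ?_⟩
      · rw [sub_sub_cancel]; exact hXpd.inv
      · rw [sub_sub_cancel]
        have h1 : X * (1 - X⁻¹) = X - 1 := by
          rw [Matrix.mul_sub, Matrix.mul_one,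
            Matrix.mul_nonsing_inv _ (isUnit_iff_ne_zero.mpr hXpd.det_pos.ne')]
        have hre : X.det = ((X.det.re : ℝ) : ℂ) := Complex.ext (by simp) (by simp [hXdet.2])
        have h2 : X⁻¹.det = ((X.det.re⁻¹ : ℝ) : ℂ) := by
          rw [Matrix.det_nonsing_inv, Ring.inverse_eq_inv', hre, ← Complex.ofReal_inv]
          simp
        rw [h1, Matrix.trace_sub, Matrix.trace_one, Complex.sub_re, h2, Complex.ofReal_re,
          Real.log_inv]
        simp [Fintype.card_fin]
        ring
    exact ⟨hub, fun b hb => hb hmem⟩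
  · intro hXnd M
    obtain ⟨x, hx0, hxq⟩ : ∃ x : Fin p → ℂ, x ≠ 0 ∧ ¬(0 < star x ⬝ᵥ X *ᵥ x) := by
      by_contra h
      push_neg at h
      exact hXnd (Matrix.PosDef.of_dotProduct_mulVec_pos hX h)
    have hqim : (star x ⬝ᵥ X *ᵥ x).im = 0 := quad_im_zero hX x
    have hqre : (star x ⬝ᵥ X *ᵥ x).re ≤ 0 := by
      by_contra h
      push_neg at h
      exact hxq (Complex.lt_def.mpr ⟨by simpa using h, by simp [hqim]⟩)
    clear hxq
    have hxx : (0 : ℂ) < star x ⬝ᵥ x := dotProduct_star_self_pos_iff.mpr hx0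
    rw [Complex.lt_def] at hxx
    set n : ℝ := (star x ⬝ᵥ x).re with hn
    have hn0 : 0 < n := by simpa using hxx.1
    have hxxeq : star x ⬝ᵥ x = ((n : ℝ) : ℂ) := Complex.ext (by simp [hn]) (by simp [← hxx.2])
    set r : ℝ := Real.sqrt (Real.exp M / n) with hr
    have hr2 : r ^ 2 = Real.exp M / n := Real.sq_sqrt (by positivity)
    set u : Fin p → ℂ := (r : ℂ) • x with hu
    have hVH : (vecMulVec u (star u)).IsHermitian := by
      show (vecMulVec u (star u))ᴴ = vecMulVec u (star u)
      ext i j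
      simp only [Matrix.conjTranspose_apply, Matrix.vecMulVec_apply, Pi.star_apply, star_mul',
        star_star]
      ring
    have hmv : ∀ y, vecMulVec u (star u) *ᵥ y = (star u ⬝ᵥ y) • u := by
      intro y
      ext i
      simp only [Matrix.mulVec, dotProduct, Matrix.vecMulVec_apply, Pi.smul_apply, smul_eq_mul,
        Pi.star_apply, Finset.sum_mul]
      exact Finset.sum_congr rfl fun j _ => by ring
    have hPSD : (vecMulVec u (star u)).PosSemidef := by
      refine Matrix.posSemidef_iff_dotProduct_mulVec.mpr ⟨hVH, fun y => ?_⟩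
      rw [hmv y, dotProduct_smul, smul_eq_mul]
      have hsd : star y ⬝ᵥ u = star (star u ⬝ᵥ y) := Matrix.star_dotProduct y u
      rw [hsd]
      exact mul_star_self_nonneg _
    have h1Y : (1 : Matrix (Fin p) (Fin p) ℂ) - -(vecMulVec u (star u))
        = 1 + vecMulVec u (star u) := sub_neg_eq_add _ _
    have hsuu : star u ⬝ᵥ u = ((r ^ 2 * n : ℝ) : ℂ) := by
      simp only [hu, star_smul, smul_dotProduct, dotProduct_smul, smul_eq_mul, hxxeq,
        Complex.star_def, Complex.conj_ofReal]
      push_cast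
      ring
    have hdet1Y : ((1 : Matrix (Fin p) (Fin p) ℂ) + vecMulVec u (star u)).det
        = 1 + star u ⬝ᵥ u := by
      rw [vecMulVec_eq Unit, Matrix.det_one_add_replicateCol_mul_replicateRow]
    refine ⟨-(vecMulVec u (star u)), hVH.neg, ?_, ?_⟩
    · rw [h1Y]
      exact Matrix.PosDef.one.add_posSemidef hPSD
    · have htrY : (X * -(vecMulVec u (star u))).trace
          = ((-(r ^ 2 * (star x ⬝ᵥ X *ᵥ x).re) : ℝ) : ℂ) := by
        rw [Matrix.mul_neg, Matrix.trace_neg, trace_mul_vecMulVec]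
        have hq : star x ⬝ᵥ X *ᵥ x = (((star x ⬝ᵥ X *ᵥ x).re : ℝ) : ℂ) :=
          Complex.ext (by simp) (by simp [hqim])
        simp only [hu, star_smul, smul_dotProduct, Matrix.mulVec_smul, dotProduct_smul,
          smul_eq_mul, Complex.star_def, Complex.conj_ofReal]
        rw [hq]
        push_cast
        simp only [Complex.ofReal_re]
        ring
      have e1 : ((X * -(vecMulVec u (star u))).trace).re
          = -(r ^ 2 * (star x ⬝ᵥ X *ᵥ x).re) := by rw [htrY, Complex.ofReal_re]
      have e2 : (((1 : Matrix (Fin p) (Fin p) ℂ) - -(vecMulVec u (star u))).det).re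
          = 1 + r ^ 2 * n := by
        rw [h1Y, hdet1Y, hsuu, Complex.add_re, Complex.one_re, Complex.ofReal_re]
      rw [e1, e2]
      have h3 : r ^ 2 * n = Real.exp M := by
        rw [hr2]; field_simp
      have h4 : M < Real.log (1 + r ^ 2 * n) := by
        rw [h3, Real.lt_log_iff_exp_lt (by positivity)]
        exact lt_one_add _
      have h5 : 0 ≤ r ^ 2 * -(star x ⬝ᵥ X *ᵥ x).re :=
        mul_nonneg (sq_nonneg r) (neg_nonneg.mpr hqre)
      linarith
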